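/- The minimum over k with 1 ≤ k ≤ n−1 of 2·X₄(n−k) + 2^k − 1 is attained at some k with n − k equal to a point where f(n−k+1) = k − 1 or k; concretely, if n = t(t+1)/2 + r with 1 ≤ r ≤ t+1, then k = t+1 (equivalently k = t when r ≤ t is also optimal in boundary cases) achieves the minimum, and the minimum value equals X₄(n). -/

import Mathlib

/-- `hanoiF j` is the largest nonnegative integer `m` with `j > m(m+1)/2`. -/
def hanoiF (j : ℕ) : ℕ := Nat.findGreatest (fun m => m * (m + 1) / 2 < j) j

/-- Frame–Stewart move count `X₄(n) = Σ_{j=1}^n 2^{f(j)}`. -/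
def X4 (n : ℕ) : ℕ := ∑ j ∈ Finset.Icc 1 n, 2 ^ hanoiF j

lemma tri_succ (s : ℕ) : (s+1)*(s+1+1)/2 = s*(s+1)/2 + (s+1) := by
  have h : (s+1)*(s+1+1) = s*(s+1) + 2*(s+1) := by ring
  omega

lemma tri_le (a b : ℕ) (h : a ≤ b) : a*(a+1)/2 ≤ b*(b+1)/2 := by
  have := Nat.mul_le_mul h (by omega : a+1 ≤ b+1)
  omega

lemma self_le_tri (s : ℕ) : s ≤ s*(s+1)/2 := by
  rcases s with _ | s
  · simp
  · have h : (s+1)*2 ≤ (s+1)*(s+1+1) := Nat.mul_le_mul_left _ (by omega)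
    omega

lemma hanoiF_eq (s q : ℕ) (h1 : 1 ≤ q) (h2 : q ≤ s + 1) :
    hanoiF (s*(s+1)/2 + q) = s := by
  rw [hanoiF, Nat.findGreatest_eq_iff]
  refine ⟨?_, fun _ => by omega, fun m hm hm2 hP => ?_⟩
  · have := self_le_tri s; omega
  · have h3 : (s+1)*(s+1+1)/2 ≤ m*(m+1)/2 := tri_le _ _ (by omega)
    have h4 := tri_succ s
    omega

lemma hanoiF_mono {a b : ℕ} (h : a ≤ b) : hanoiF a ≤ hanoiF b :=
  Nat.findGreatest_mono (fun m hm => lt_of_lt_of_le hm h) h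

lemma X4_succ (m : ℕ) : X4 (m+1) = X4 m + 2^(hanoiF (m+1)) := by
  rw [X4, X4, Finset.sum_Icc_succ_top (by omega : 1 ≤ m+1)]

lemma XC : ∀ s q, q ≤ s → X4 (s*(s+1)/2 + q + 1) = (s+q)*2^s + 1 := by
  intro s
  induction s with
  | zero =>
    intro q hq
    obtain rfl := Nat.le_zero.mp hq
    decide
  | succ s ih =>
    have hbase : X4 ((s+1)*(s+1+1)/2) = (s+s)*2^s + 1 := by
      have h := ih s le_rfl
      have ht := tri_succ s
      rw [show (s+1)*(s+1+1)/2 = s*(s+1)/2 + s + 1 by omega]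
      exact h
    have inner : ∀ q, q ≤ s+1 → X4 ((s+1)*(s+1+1)/2 + q + 1) = (s+1+q)*2^(s+1) + 1 := by
      intro q
      induction q with
      | zero =>
        intro _
        rw [show (s+1)*(s+1+1)/2 + 0 + 1 = (s+1)*(s+1+1)/2 + 1 by omega]
        rw [X4_succ, hanoiF_eq (s+1) 1 (by omega) (by omega), hbase, pow_succ]
        ring
      | succ q ihq =>
        intro hq
        have h1 := ihq (by omega)
        rw [show (s+1)*(s+1+1)/2 + (q+1) + 1 = ((s+1)*(s+1+1)/2 + q + 1) + 1 by omega]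
        rw [X4_succ, h1,
          show (s+1)*(s+1+1)/2 + q + 1 + 1 = (s+1)*(s+1+1)/2 + (q+2) by omega,
          hanoiF_eq (s+1) (q+2) (by omega) (by omega), pow_succ]
        ring
    exact inner

lemma arithA' (a E : ℕ) : 2*(a*E+1) + E*2 - 1 = (a+1)*(E*2)+1 := by
  have h1 : (a+1)*(E*2) = 2*(a*E) + E*2 := by ring
  rw [h1]
  generalize a*E = X
  omega

lemma arithB (a E : ℕ) : 2*((a+a)*E+1) + E*2*2 - 1 = (a+1+(a+1))*(E*2)+1 := by
  have h1 : (a+1+(a+1))*(E*2) = 2*((a+a)*E) + E*2*2 := by ring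
  rw [h1]
  generalize (a+a)*E = X
  omega

/-- If `n = t(t+1)/2 + r` with `1 ≤ r ≤ t+1` (and `n ≥ 2`), then the minimum of
`2·X₄(n−k) + 2^k − 1` over `1 ≤ k ≤ n−1` equals `X₄(n)` and is attained at the
split size `k = t+1` (or `k = t` in boundary cases). -/
theorem stmt_15 (t r n : ℕ) (hr1 : 1 ≤ r) (hr2 : r ≤ t + 1)
    (hn : n = t * (t + 1) / 2 + r) (hn2 : 2 ≤ n) :
    (∀ k ∈ Finset.Icc 1 (n - 1), X4 n ≤ 2 * X4 (n - k) + 2 ^ k - 1) ∧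
    ∃ k ∈ Finset.Icc 1 (n - 1), (k = t ∨ k = t + 1) ∧
      2 * X4 (n - k) + 2 ^ k - 1 = X4 n := by
  have ht0 : 1 ≤ t := by
    rcases t with _ | t
    · exfalso; simp at hn; omega
    · omega
  obtain ⟨u, rfl⟩ : ∃ u, t = u + 1 := ⟨t - 1, by omega⟩
  have hx1 := XC u (min r (u+1) - 1) (by omega)
  have hx2 := XC (u+1) (r-1) (by omega)
  have hf1 := hanoiF_eq u (min r (u+1)) (by omega) (by omega)
  have hf2 := hanoiF_eq u 1 (by omega) (by omega)
  have e1 := tri_succ u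
  have e3 := self_le_tri u
  obtain ⟨A, hA⟩ : ∃ x, x = u*(u+1)/2 := ⟨_, rfl⟩
  obtain ⟨B, hB⟩ : ∃ x, x = (u+1)*(u+1+1)/2 := ⟨_, rfl⟩
  rw [← hA] at hx1 hf1 hf2 e3 e1
  rw [← hB] at hn e1 hx2
  -- now: hn : n = B + r, e1 : B = A + (u+1), e3 : u ≤ A
  obtain ⟨k0, hk0a, hk0c, hk0e⟩ :
      ∃ k0, (k0 = u+1 ∨ k0 = u+2) ∧ n - k0 = A + min r (u+1) ∧ k0 ≤ u + r := by
    rcases le_or_gt r (u+1) with h | h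
    · exact ⟨u+1, Or.inl rfl, by omega, by omega⟩
    · exact ⟨u+2, Or.inr rfl, by omega, by omega⟩
  have hk0l : u + 1 ≤ k0 := by rcases hk0a with rfl | rfl <;> omega
  have hk0h : k0 ≤ u + 2 := by rcases hk0a with rfl | rfl <;> omega
  have hkn : k0 ≤ n - 1 := by omega
  have hfu : hanoiF (n - k0) = u := by rw [hk0c]; exact hf1
  have hxm : X4 (n - k0) = (u + (min r (u+1) - 1))*2^u + 1 := by
    rw [show n - k0 = A + (min r (u+1) - 1) + 1 by omega]; exact hx1
  have hxn : X4 n = (u+1+(r-1))*2^(u+1) + 1 := by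
    rw [show n = B + (r-1) + 1 by omega]; exact hx2
  have hGk : 2 * X4 (n - k0) + 2 ^ k0 - 1 = X4 n := by
    rw [hxm, hxn]
    rcases hk0a with rfl | rfl
    · have hM : min r (u+1) = r := by omega
      rw [hM]
      obtain ⟨c, rfl⟩ : ∃ c, r = c + 1 := ⟨r - 1, by omega⟩
      simp only [Nat.add_sub_cancel]
      rw [pow_succ, show u+1+c = u+c+1 by omega]
      exact arithA' (u+c) (2^u)
    · have hM : min r (u+1) = u + 1 := by omega
      rw [hM]
      have hr : r = u + 2 := by omega
      subst hr
      simp only [Nat.add_sub_cancel]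
      rw [show (u:ℕ)+2 = u+1+1 by omega, pow_succ, pow_succ,
        show u+1+(u+1+1-1) = u+1+(u+1) by omega]
      exact arithB u (2^u)
  have id1 : ∀ k, 1 ≤ n - k →
      2 * X4 (n - k) + 2 ^ k - 1 + 2 ^ k
        = 2 * X4 (n - (k+1)) + 2 ^ (k+1) - 1 + 2 ^ (hanoiF (n - k) + 1) := by
    intro k hk
    have hE : 0 < 2 ^ k := Nat.two_pow_pos k
    have h1 : n - k = (n - (k+1)) + 1 := by omega
    rw [h1, X4_succ (n - (k+1)), pow_succ 2 k, pow_succ 2 (hanoiF (n - (k+1) + 1))]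
    omega
  have step_up : ∀ k, 1 ≤ n - k → hanoiF (n - k) + 1 ≤ k →
      2 * X4 (n - k) + 2 ^ k - 1 ≤ 2 * X4 (n - (k+1)) + 2 ^ (k+1) - 1 := by
    intro k h1 h2
    have h3 := id1 k h1
    have h4 : 2 ^ (hanoiF (n - k) + 1) ≤ 2 ^ k := Nat.pow_le_pow_right (by norm_num) h2
    omega
  have step_down : ∀ k, 1 ≤ n - k → k ≤ hanoiF (n - k) + 1 →
      2 * X4 (n - (k+1)) + 2 ^ (k+1) - 1 ≤ 2 * X4 (n - k) + 2 ^ k - 1 := by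
    intro k h1 h2
    have h3 := id1 k h1
    have h4 : 2 ^ k ≤ 2 ^ (hanoiF (n - k) + 1) := Nat.pow_le_pow_right (by norm_num) h2
    omega
  have chain_up : ∀ k, k0 ≤ k → k ≤ n - 1 →
      2 * X4 (n - k0) + 2 ^ k0 - 1 ≤ 2 * X4 (n - k) + 2 ^ k - 1 := by
    intro k hk
    induction k, hk using Nat.le_induction with
    | base => intro _; exact le_rfl
    | succ k hk ih =>
      intro hk1
      have h2 := ih (by omega)
      refine le_trans h2 (step_up k (by omega) ?_)
      have h3 : hanoiF (n - k) ≤ hanoiF (n - k0) := hanoiF_mono (by omega)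
      rw [hfu] at h3
      omega
  have chain_down : ∀ j k, 1 ≤ k → k + j = k0 →
      2 * X4 (n - k0) + 2 ^ k0 - 1 ≤ 2 * X4 (n - k) + 2 ^ k - 1 := by
    intro j
    induction j with
    | zero =>
      intro k h1 h2
      have : k = k0 := by omega
      subst this
      exact le_rfl
    | succ j ih =>
      intro k h1 h2
      have h3 := ih (k+1) (by omega) (by omega)
      refine le_trans h3 (step_down k (by omega) ?_)
      have h4 : hanoiF (A + 1) ≤ hanoiF (n - k) := hanoiF_mono (by omega)
      rw [hf2] at h4
      omega
  constructor
  · intro k hk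
    rw [Finset.mem_Icc] at hk
    rcases le_total k k0 with h | h
    · have h5 := chain_down (k0 - k) k hk.1 (by omega)
      omega
    · have h5 := chain_up k h hk.2
      omega
  · refine ⟨k0, Finset.mem_Icc.mpr ⟨by omega, hkn⟩, ?_, hGk⟩
    rcases hk0a with rfl | rfl
    · exact Or.inl rfl
    · exact Or.inr (by omega)
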